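/- Fix i ∈ ZMod 5 and let S = {(x,y) ∈ ℤ×ℤ : (x + 2y) mod 5 = i} be a color class of the mod-5 vertex coloring of the grid graph G□. Then any two distinct elements of S are at graph distance at least 3 in G□, and every vertex of ℤ×ℤ is at graph distance at most 1 from S. -/

import Mathlib

/-- The grid graph on ℤ × ℤ: two vertices adjacent iff their difference is ±(1,0) or ±(0,1). -/
def gridGraph : SimpleGraph (ℤ × ℤ) :=
  SimpleGraph.fromRel (fun u v => u - v = (1, 0) ∨ u - v = (0, 1))

/-- The color class of i ∈ ZMod 5 under the coloring (x + 2y) mod 5. -/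
def classOf (i : ZMod 5) : Set (ℤ × ℤ) :=
  {p : ℤ × ℤ | ((p.1 + 2 * p.2 : ℤ) : ZMod 5) = i}

private def phi (p : ℤ × ℤ) : ZMod 5 := ((p.1 + 2 * p.2 : ℤ) : ZMod 5)

private lemma phi_sub (u v : ℤ × ℤ) : phi (u - v) = phi u - phi v := by
  simp only [phi, Prod.fst_sub, Prod.snd_sub]
  push_cast
  ring

private lemma adj_sub {u v : ℤ × ℤ} (h : gridGraph.Adj u v) :
    u - v = (1, 0) ∨ u - v = (-1, 0) ∨ u - v = (0, 1) ∨ u - v = (0, -1) := by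
  rw [gridGraph, SimpleGraph.fromRel_adj] at h
  obtain ⟨-, h | h⟩ := h
  · rcases h with h | h
    · exact Or.inl h
    · exact Or.inr (Or.inr (Or.inl h))
  · rcases h with h | h
    · refine Or.inr (Or.inl ?_)
      have h2 : u - v = -(v - u) := by ring
      rw [h2, h]; rfl
    · refine Or.inr (Or.inr (Or.inr ?_))
      have h2 : u - v = -(v - u) := by ring
      rw [h2, h]; rfl

private lemma adj_step (p d : ℤ × ℤ) (hd : d = (1, 0) ∨ d = (0, 1)) :
    gridGraph.Adj p (p + d) := by
  have hne : p ≠ p + d := by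
    rcases hd with rfl | rfl <;> intro hc <;>
      (simp only [Prod.ext_iff, Prod.fst_add, Prod.snd_add] at hc; omega)
  rw [gridGraph, SimpleGraph.fromRel_adj]
  refine ⟨hne, Or.inr ?_⟩
  have h2 : p + d - p = d := by ring
  rw [h2]
  exact hd

private lemma reach_x (k : ℤ) : ∀ x y : ℤ, gridGraph.Reachable (x, y) (x + k, y) := by
  induction k using Int.induction_on with
  | zero => intro x y; rw [add_zero]
  | succ n ih =>
    intro x y
    refine (ih x y).trans ?_
    have h := (adj_step (x + n, y) (1, 0) (Or.inl rfl)).reachable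
    have he : ((x + n : ℤ), y) + (1, 0) = (x + (n + 1), y) := by
      simp only [Prod.ext_iff, Prod.fst_add, Prod.snd_add]
      constructor <;> push_cast <;> ring
    rwa [he] at h
  | pred n ih =>
    intro x y
    refine (ih x y).trans ?_
    have h := (adj_step (x + (-n - 1), y) (1, 0) (Or.inl rfl)).reachable.symm
    have he : ((x + (-n - 1) : ℤ), y) + (1, 0) = (x + -n, y) := by
      simp only [Prod.ext_iff, Prod.fst_add, Prod.snd_add]
      constructor <;> push_cast <;> ring
    rwa [he] at h

private lemma reach_y (k : ℤ) : ∀ x y : ℤ, gridGraph.Reachable (x, y) (x, y + k) := by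
  induction k using Int.induction_on with
  | zero => intro x y; rw [add_zero]
  | succ n ih =>
    intro x y
    refine (ih x y).trans ?_
    have h := (adj_step (x, y + n) (0, 1) (Or.inr rfl)).reachable
    have he : ((x : ℤ), (y + n : ℤ)) + (0, 1) = (x, y + (n + 1)) := by
      simp only [Prod.ext_iff, Prod.fst_add, Prod.snd_add]
      constructor <;> push_cast <;> ring
    rwa [he] at h
  | pred n ih =>
    intro x y
    refine (ih x y).trans ?_
    have h := (adj_step (x, y + (-n - 1)) (0, 1) (Or.inr rfl)).reachable.symm
    have he : ((x : ℤ), (y + (-n - 1) : ℤ)) + (0, 1) = (x, y + -n) := by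
      simp only [Prod.ext_iff, Prod.fst_add, Prod.snd_add]
      constructor <;> push_cast <;> ring
    rwa [he] at h

private lemma grid_reachable (u v : ℤ × ℤ) : gridGraph.Reachable u v := by
  obtain ⟨a, b⟩ := u
  obtain ⟨c, d⟩ := v
  have h1 := reach_x (c - a) a b
  have h2 := reach_y (d - b) c b
  rw [add_sub_cancel] at h1 h2
  exact h1.trans h2

private lemma walk2 {u v : ℤ × ℤ} (p : gridGraph.Walk u v) (hl : p.length ≤ 2)
    (hphi : phi u = phi v) : u = v := by
  cases p with
  | nil => rfl
  | @cons _ w _ h q =>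
    cases q with
    | nil =>
      exfalso
      have h1 := adj_sub h
      have h2 : phi (u - v) = 0 := by rw [phi_sub, hphi, sub_self]
      rcases h1 with h1 | h1 | h1 | h1 <;> rw [h1] at h2 <;>
        simp only [phi] at h2 <;> revert h2 <;> decide
    | @cons _ z _ h' q' =>
      have hq' : q'.length = 0 := by
        simp only [SimpleGraph.Walk.length_cons] at hl; omega
      have hzv : z = v := by
        cases q' with
        | nil => rfl
        | cons _ _ => simp at hq'
      subst hzv
      have ha := adj_sub h
      have hb := adj_sub h'
      have hsum : phi (u - w) + phi (w - z) = 0 := by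
        rw [phi_sub, phi_sub, hphi]; ring
      by_cases huv : u = z
      · exact huv
      · exfalso
        have hne2 : (u - w) + (w - z) ≠ 0 := by
          intro hc
          apply huv
          have h3 : u - z = 0 := by rw [← hc]; ring
          exact sub_eq_zero.mp h3
        rcases ha with ha | ha | ha | ha <;> rcases hb with hb | hb | hb | hb <;>
          rw [ha, hb] at hsum hne2 <;>
          first
          | exact hne2 (by decide)
          | (revert hsum; simp only [phi]; decide)

theorem stmt14 (i : ZMod 5) :
    (∀ u ∈ classOf i, ∀ v ∈ classOf i, u ≠ v → 3 ≤ gridGraph.dist u v) ∧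
    (∀ v : ℤ × ℤ, ∃ w ∈ classOf i, gridGraph.dist v w ≤ 1) := by
  constructor
  · intro u hu v hv hne
    by_contra hlt
    push_neg at hlt
    have hr := grid_reachable u v
    obtain ⟨p, hp⟩ := hr.exists_walk_length_eq_dist
    have hlen : p.length ≤ 2 := by omega
    have hphi : phi u = phi v := by
      simp only [classOf, Set.mem_setOf_eq] at hu hv
      rw [phi, phi, hu, hv]
    exact hne (walk2 p hlen hphi)
  · intro v
    obtain ⟨x, y⟩ := v
    have adjd : ∀ u w : ℤ × ℤ, gridGraph.Adj u w → gridGraph.dist u w ≤ 1 := by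
      intro u w h
      have h2 := SimpleGraph.dist_le h.toWalk
      simpa using h2
    have h5 : (5 : ZMod 5) = 0 := by decide
    have key : ∀ d : ZMod 5, d = 0 ∨ d = 1 ∨ d = 2 ∨ d = 3 ∨ d = 4 := by decide
    have hmem : ∀ w : ℤ × ℤ, phi w = i → w ∈ classOf i := fun w hw => hw
    rcases key (i - phi (x, y)) with h | h | h | h | h <;> rw [sub_eq_iff_eq_add] at h
    · exact ⟨(x, y), hmem _ (by rw [h]; ring), by rw [SimpleGraph.dist_self]; exact Nat.zero_le 1⟩
    · refine ⟨(x + 1, y), hmem _ ?_, adjd _ _ ?_⟩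
      · rw [h]; simp only [phi]; push_cast; ring
      · have h2 := adj_step (x, y) (1, 0) (Or.inl rfl)
        have he : ((x : ℤ), (y : ℤ)) + (1, 0) = (x + 1, y) := by
          simp only [Prod.ext_iff, Prod.fst_add, Prod.snd_add]
          exact ⟨trivial, by ring⟩
        rwa [he] at h2
    · refine ⟨(x, y + 1), hmem _ ?_, adjd _ _ ?_⟩
      · rw [h]; simp only [phi]; push_cast; ring
      · have h2 := adj_step (x, y) (0, 1) (Or.inr rfl)
        have he : ((x : ℤ), (y : ℤ)) + (0, 1) = (x, y + 1) := by
          simp only [Prod.ext_iff, Prod.fst_add, Prod.snd_add]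
          exact ⟨by ring, trivial⟩
        rwa [he] at h2
    · refine ⟨(x, y - 1), hmem _ ?_, adjd _ _ ?_⟩
      · rw [h]; simp only [phi]; push_cast
        linear_combination -h5
      · have h2 := (adj_step (x, y - 1) (0, 1) (Or.inr rfl)).symm
        have he : ((x : ℤ), (y - 1 : ℤ)) + (0, 1) = (x, y) := by
          simp only [Prod.ext_iff, Prod.fst_add, Prod.snd_add]
          constructor <;> ring
        rwa [he] at h2
    · refine ⟨(x - 1, y), hmem _ ?_, adjd _ _ ?_⟩
      · rw [h]; simp only [phi]; push_cast
        linear_combination -h5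
      · have h2 := (adj_step (x - 1, y) (1, 0) (Or.inl rfl)).symm
        have he : ((x - 1 : ℤ), (y : ℤ)) + (1, 0) = (x, y) := by
          simp only [Prod.ext_iff, Prod.fst_add, Prod.snd_add]
          constructor <;> ring
        rwa [he] at h2
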